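/- Let a, b ∈ ℝ with -1 < a < 0 and b < 0, and set M := (1 + a·exp(W₀(-e/a) - 1))·b·(1 - W₀(-e/a)). If y > M, then the equation |1 + a·exp(-x/b)|·x = y has a unique solution x ∈ [0,∞), and it satisfies x > b·ln|a|. -/

import Mathlib

open Real

set_option maxHeartbeats 1000000 in
theorem stmt_15 (a b : ℝ) (ha1 : -1 < a) (ha2 : a < 0) (hb : b < 0)
    (z0 : ℝ) (hz0 : -1 ≤ z0 ∧ z0 * Real.exp z0 = -(Real.exp 1) / a)
    (M : ℝ) (hM : M = (1 + a * Real.exp (z0 - 1)) * (b * (1 - z0)))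
    (y : ℝ) (hy : M < y) :
    (∃! x : ℝ, 0 ≤ x ∧ |1 + a * Real.exp (-x / b)| * x = y) ∧
    ∀ x : ℝ, 0 ≤ x → |1 + a * Real.exp (-x / b)| * x = y → b * Real.log |a| < x := by
  obtain ⟨hz0a, hz0b⟩ := hz0
  have ha0 : a ≠ 0 := ne_of_lt ha2
  have hb0 : b ≠ 0 := ne_of_lt hb
  have hib : (0:ℝ) < -b := by linarith
  have hna : 0 < -a := by linarith
  have hna1 : -a < 1 := by linarith
  -- z0 > 1
  have hz1 : 1 < z0 := by
    by_contra h
    push_neg at h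
    have h1 : z0 * Real.exp z0 ≤ Real.exp 1 := by
      rcases le_or_gt z0 0 with h2 | h2
      · nlinarith [Real.exp_pos z0, Real.exp_pos 1]
      · nlinarith [Real.exp_le_exp.mpr h, Real.exp_pos z0]
    rw [hz0b] at h1
    have h2 : Real.exp 1 < -(Real.exp 1) / a := by
      rw [lt_div_iff_of_neg ha2]
      nlinarith [Real.exp_pos 1]
    linarith
  have hz0pos : (0:ℝ) < z0 := by linarith
  -- key identity
  have h3 : a * (z0 * Real.exp z0) = -(Real.exp 1) := by
    rw [hz0b]; field_simp
  have hkey : a * z0 * Real.exp (z0 - 1) = -1 := by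
    have he : Real.exp (z0 - 1) = Real.exp z0 / Real.exp 1 := by
      rw [Real.exp_sub]
    rw [he, ← mul_div_assoc, div_eq_iff (Real.exp_ne_zero 1)]
    linarith [h3]
  have hMz : M * z0 = -b * (z0 - 1) ^ 2 := by
    rw [hM]; linear_combination (b * (1 - z0)) * hkey
  have hMpos : 0 < M := by
    nlinarith [sq_nonneg (z0 - 1), mul_pos (sub_pos.2 hz1) (sub_pos.2 hz1)]
  have hypos : 0 < y := lt_trans hMpos hy
  -- core inequality
  have core : ∀ v : ℝ, -(z0 - 1) ≤ v →
      (v + (z0 - 1)) * (z0 - Real.exp v) ≤ (z0 - 1) ^ 2 := by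
    intro v hv
    have h1 := Real.add_one_le_exp v
    rcases le_or_gt (Real.exp v) z0 with h | h
    · nlinarith [mul_nonneg (by linarith : (0:ℝ) ≤ v + (z0 - 1))
        (by linarith : (0:ℝ) ≤ Real.exp v - (v + 1)), sq_nonneg v]
    · nlinarith [mul_nonneg (by linarith : (0:ℝ) ≤ v + (z0 - 1))
        (by linarith : (0:ℝ) ≤ Real.exp v - z0), sq_nonneg (z0 - 1)]
  -- bound on the "positive branch" expression, valid for all x ≥ 0
  have fbound : ∀ x : ℝ, 0 ≤ x → (1 + a * Real.exp (-x / b)) * x ≤ M := by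
    intro x hx
    set v := -x / b - (z0 - 1) with hv
    have hxv : x = -b * (v + (z0 - 1)) := by
      rw [hv]; field_simp; ring
    have hub : 0 ≤ -x / b := by
      rw [neg_div, ← div_neg]
      exact div_nonneg hx hib.le
    have hvge : -(z0 - 1) ≤ v := by
      rw [hv]; linarith
    have hexpv : Real.exp (-x / b) = Real.exp (z0 - 1) * Real.exp v := by
      rw [← Real.exp_add]; congr 1; rw [hv]; ring
    have hcore := core v hvge
    have h5 : z0 * ((1 + a * Real.exp (-x / b)) * x)
        = -b * ((v + (z0 - 1)) * (z0 - Real.exp v)) := by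
      rw [hexpv]
      rw [hxv]
      linear_combination (-b * (v + (z0 - 1)) * Real.exp v) * hkey
    have h6 : z0 * ((1 + a * Real.exp (-x / b)) * x) ≤ z0 * M := by
      rw [h5]
      have h7 : -b * ((v + (z0 - 1)) * (z0 - Real.exp v)) ≤ -b * (z0 - 1) ^ 2 :=
        mul_le_mul_of_nonneg_left hcore (by linarith)
      linarith
    exact le_of_mul_le_mul_left h6 hz0pos
  -- the breakpoint L
  set L := b * Real.log (-a) with hLdef
  have hlogneg : Real.log (-a) < 0 := Real.log_neg hna hna1
  have hLpos : 0 < L := mul_pos_of_neg_of_neg hb hlogneg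
  have hexpL : Real.exp (-L / b) = (-a)⁻¹ := by
    have h8 : -L / b = -Real.log (-a) := by
      rw [hLdef, neg_div, mul_div_cancel_left₀ _ hb0]
    rw [h8, Real.exp_neg, Real.exp_log hna]
  have haL : 1 + a * Real.exp (-L / b) = 0 := by
    rw [hexpL]; field_simp; norm_num
  -- monotone rewriting of -x/b
  have hdivmono : ∀ x1 x2 : ℝ, x1 ≤ x2 → -x1 / b ≤ -x2 / b := by
    intro x1 x2 h
    rw [neg_div, neg_div, ← div_neg, ← div_neg]
    exact (div_le_div_iff_of_pos_right hib).mpr h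
  have hdivstrict : ∀ x1 x2 : ℝ, x1 < x2 → -x1 / b < -x2 / b := by
    intro x1 x2 h
    rw [neg_div, neg_div, ← div_neg, ← div_neg]
    exact (div_lt_div_iff_of_pos_right hib).mpr h
  -- sign lemmas
  have hsign_le : ∀ x : ℝ, x ≤ L → 0 ≤ 1 + a * Real.exp (-x / b) := by
    intro x hx
    have h7 : Real.exp (-x / b) ≤ Real.exp (-L / b) :=
      Real.exp_le_exp.mpr (hdivmono x L hx)
    nlinarith [h7, haL]
  have hsign_ge : ∀ x : ℝ, L ≤ x → 1 + a * Real.exp (-x / b) ≤ 0 := by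
    intro x hx
    have h7 : Real.exp (-L / b) ≤ Real.exp (-x / b) :=
      Real.exp_le_exp.mpr (hdivmono L x hx)
    nlinarith [h7, haL]
  have habs_le : ∀ x : ℝ, 0 ≤ x → x ≤ L → |1 + a * Real.exp (-x / b)| * x ≤ M := by
    intro x h0 h1
    rw [abs_of_nonneg (hsign_le x h1)]
    exact fbound x h0
  -- strict monotonicity on [L, ∞)
  have hstrict : ∀ x1 x2 : ℝ, L ≤ x1 → x1 < x2 →
      |1 + a * Real.exp (-x1 / b)| * x1 < |1 + a * Real.exp (-x2 / b)| * x2 := by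
    intro x1 x2 h1 h2
    have hs1 := hsign_ge x1 h1
    have hs2 := hsign_ge x2 (le_of_lt (lt_of_le_of_lt h1 h2))
    have he : Real.exp (-x1 / b) < Real.exp (-x2 / b) :=
      Real.exp_lt_exp.mpr (hdivstrict x1 x2 h2)
    rw [abs_of_nonpos hs1, abs_of_nonpos hs2]
    have hx1p : 0 < x1 := lt_of_lt_of_le hLpos h1
    set e1 := Real.exp (-x1 / b) with he1
    set e2 := Real.exp (-x2 / b) with he2
    nlinarith [mul_pos (mul_pos hna (show (0:ℝ) < e2 - e1 by linarith))
        (show (0:ℝ) < x2 by linarith),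
      mul_nonneg (show (0:ℝ) ≤ -(1 + a * e1) by linarith)
        (show (0:ℝ) ≤ x2 - x1 by linarith)]
  -- existence via IVT
  set R := max ((-b) * Real.log (2 * (-a)⁻¹)) y with hRdef
  have hRy : y ≤ R := le_max_right _ _
  have hR1 : (-b) * Real.log (2 * (-a)⁻¹) ≤ R := le_max_left _ _
  have hinv : 0 < (-a)⁻¹ := inv_pos.mpr hna
  have hL' : L = (-b) * Real.log ((-a)⁻¹) := by
    rw [hLdef, Real.log_inv]; ring
  have hLR : L ≤ R := by
    have h9 : Real.log ((-a)⁻¹) < Real.log (2 * (-a)⁻¹) :=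
      Real.log_lt_log hinv (by nlinarith)
    calc L = (-b) * Real.log ((-a)⁻¹) := hL'
    _ ≤ (-b) * Real.log (2 * (-a)⁻¹) := by nlinarith
    _ ≤ R := hR1
  have hexpR : 2 * (-a)⁻¹ ≤ Real.exp (-R / b) := by
    have h10 : Real.log (2 * (-a)⁻¹) ≤ -R / b := by
      rw [neg_div, ← div_neg, le_div_iff₀ hib]
      linarith [hR1]
    calc 2 * (-a)⁻¹ = Real.exp (Real.log (2 * (-a)⁻¹)) :=
          (Real.exp_log (by positivity)).symm
    _ ≤ Real.exp (-R / b) := Real.exp_le_exp.mpr h10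
  have hRpos : 0 < R := lt_of_lt_of_le hypos hRy
  have hfR : y ≤ |1 + a * Real.exp (-R / b)| * R := by
    have h11 : 1 + a * Real.exp (-R / b) ≤ -1 := by
      have := mul_le_mul_of_nonpos_left hexpR ha2.le
      have ha' : a * (2 * (-a)⁻¹) = -2 := by field_simp
      nlinarith
    have h12 : 1 ≤ |1 + a * Real.exp (-R / b)| := by
      rw [abs_of_nonpos (by linarith)]; linarith
    nlinarith
  have hcont : ContinuousOn (fun x : ℝ => |1 + a * Real.exp (-x / b)| * x) (Set.Icc L R) := by
    fun_prop
  have hfL : |1 + a * Real.exp (-L / b)| * L = 0 := by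
    rw [haL]; simp
  obtain ⟨x, hxmem, hxeq⟩ := intermediate_value_Icc hLR hcont
    (by rw [hfL]; exact ⟨hypos.le, hfR⟩)
  simp only at hxeq
  have hxL : L ≤ x := hxmem.1
  have hx0 : 0 ≤ x := le_of_lt (lt_of_lt_of_le hLpos hxL)
  -- any solution is > L
  have hsolgt : ∀ x' : ℝ, 0 ≤ x' → |1 + a * Real.exp (-x' / b)| * x' = y → L < x' := by
    intro x' h0 heq
    by_contra h
    push_neg at h
    have := habs_le x' h0 h
    linarith [heq ▸ this]
  constructor
  · refine ⟨x, ⟨hx0, hxeq⟩, ?_⟩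
    intro x' ⟨h0, heq⟩
    have hx'L : L < x' := hsolgt x' h0 heq
    rcases lt_trichotomy x' x with h | h | h
    · exfalso
      have := hstrict x' x hx'L.le h
      rw [hxeq, heq] at this; linarith
    · exact h
    · exfalso
      have := hstrict x x' hxL h
      rw [hxeq, heq] at this; linarith
  · intro x' h0 heq
    rw [abs_of_neg ha2, ← hLdef]
    exact hsolgt x' h0 heq
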